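/- Let $Q = (x^3,y^3)$ in $R = k[x,y,a,b]$ and let $i, j$ be non-negative integers with $i + j \ge 3n$ for some integer $n \ge 1$. Then the monomial $x^i y^j$ does not belong to $Q^n$ if and only if either ($i+j = 3n$ and $ij \not\equiv 0 \pmod 3$), or ($i+j = 3n+1$ and $i \equiv 2 \pmod 3$ and $j \equiv 2 \pmod 3$). -/

import Mathlib

open MvPolynomial

lemma le_helper (s t i j : ℕ) :
    (Finsupp.single (0 : Fin 4) s + Finsupp.single 1 t ≤
      Finsupp.single 0 i + Finsupp.single 1 j) ↔ s ≤ i ∧ t ≤ j := by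
  rw [Finsupp.le_def]
  constructor
  · intro h
    refine ⟨?_, ?_⟩
    · have := h 0
      simpa [Finsupp.single_apply] using this
    · have := h 1
      simpa [Finsupp.single_apply] using this
  · rintro ⟨h1, h2⟩ a
    fin_cases a <;> simp [Finsupp.single_apply] <;> omega

lemma spanS (k : Type*) [Field k] (n : ℕ) :
    (Ideal.span {(X 0 : MvPolynomial (Fin 4) k) ^ 3, X 1 ^ 3}) ^ n =
      Ideal.span ((fun e => monomial e (1 : k)) ''
        ((fun s => Finsupp.single (0 : Fin 4) (3 * s) + Finsupp.single 1 (3 * (n - s))) ''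
          Set.Iic n)) := by
  induction n with
  | zero =>
    simp only [pow_zero, Set.Iic, Nat.le_zero]
    have : ((fun s => Finsupp.single (0 : Fin 4) (3 * s) + Finsupp.single 1 (3 * (0 - s))) ''
        {s | s = 0}) = {(0 : Fin 4 →₀ ℕ)} := by
      ext e
      simp
    rw [this]
    simp [Ideal.one_eq_top, monomial_zero', Ideal.span_singleton_one]
  | succ n ih =>
    rw [pow_succ, ih, Ideal.span_mul_span']
    apply le_antisymm <;> rw [Ideal.span_le]
    · rintro p hp
      rw [Set.mem_mul] at hp
      obtain ⟨a, ha, b, hb, rfl⟩ := hp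
      obtain ⟨e, ⟨s, hs, rfl⟩, rfl⟩ := ha
      simp only [Set.Iic, Set.mem_setOf_eq] at hs
      apply Ideal.subset_span
      rcases hb with hb | hb
      · -- b = X 0 ^ 3
        subst hb
        refine ⟨Finsupp.single (0 : Fin 4) (3 * (s + 1)) +
          Finsupp.single 1 (3 * (n + 1 - (s + 1))), ⟨s + 1, by simpa using hs, rfl⟩, ?_⟩
        rw [X_pow_eq_monomial, monomial_mul, one_mul]
        congr 1
        have h1 : 3 * (s + 1) = 3 * s + 3 := by ring
        have h2 : n + 1 - (s + 1) = n - s := by omega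
        rw [h1, h2, Finsupp.single_add]
        simp only [add_comm, add_left_comm, add_assoc]
      · -- b = X 1 ^ 3
        simp only [Set.mem_singleton_iff] at hb
        subst hb
        refine ⟨Finsupp.single (0 : Fin 4) (3 * s) +
          Finsupp.single 1 (3 * (n + 1 - s)), ⟨s, by simpa using Nat.le_succ_of_le hs, rfl⟩, ?_⟩
        rw [X_pow_eq_monomial, monomial_mul, one_mul]
        congr 1
        have h2 : 3 * (n + 1 - s) = 3 * (n - s) + 3 := by omega
        rw [h2, Finsupp.single_add]
        simp only [add_comm, add_left_comm, add_assoc]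
    · rintro p hp
      obtain ⟨e, ⟨s, hs, rfl⟩, rfl⟩ := hp
      simp only [Set.Iic, Set.mem_setOf_eq] at hs
      apply Ideal.subset_span
      rcases Nat.lt_or_ge s (n + 1) with h | h
      · -- s ≤ n : use e' * X 1 ^ 3
        have hsn : s ≤ n := by omega
        refine ⟨monomial (Finsupp.single (0 : Fin 4) (3 * s) +
            Finsupp.single 1 (3 * (n - s))) 1, ⟨_, ⟨s, hsn, rfl⟩, rfl⟩,
          X 1 ^ 3, Or.inr rfl, ?_⟩
        dsimp only
        rw [X_pow_eq_monomial, monomial_mul, one_mul]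
        congr 1
        have h2 : 3 * (n + 1 - s) = 3 * (n - s) + 3 := by omega
        rw [h2, Finsupp.single_add]
        abel
      · -- s = n + 1 : use e' * X 0 ^ 3
        have hsn : s = n + 1 := by omega
        subst hsn
        refine ⟨monomial (Finsupp.single (0 : Fin 4) (3 * n) +
            Finsupp.single 1 (3 * (n - n))) 1, ⟨_, ⟨n, le_refl n, rfl⟩, rfl⟩,
          X 0 ^ 3, Or.inl rfl, ?_⟩
        dsimp only
        rw [X_pow_eq_monomial, monomial_mul, one_mul]
        congr 1
        have h1 : 3 * (n + 1) = 3 * n + 3 := by ring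
        have h2 : n + 1 - (n + 1) = n - n := by omega
        rw [h1, h2, Finsupp.single_add]
        abel

theorem stmt_1 (k : Type*) [Field k] (n i j : ℕ) (hn : 1 ≤ n) (hij : 3 * n ≤ i + j) :
    ((X 0 : MvPolynomial (Fin 4) k) ^ i * X 1 ^ j ∉
        (Ideal.span {(X 0 : MvPolynomial (Fin 4) k) ^ 3, X 1 ^ 3}) ^ n) ↔
      ((i + j = 3 * n ∧ ¬ (3 ∣ i * j)) ∨
        (i + j = 3 * n + 1 ∧ i % 3 = 2 ∧ j % 3 = 2)) := by
  have hmem : ((X 0 : MvPolynomial (Fin 4) k) ^ i * X 1 ^ j ∈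
      (Ideal.span {(X 0 : MvPolynomial (Fin 4) k) ^ 3, X 1 ^ 3}) ^ n) ↔
      ∃ s, s ≤ n ∧ 3 * s ≤ i ∧ 3 * (n - s) ≤ j := by
    classical
    rw [spanS k n, X_pow_eq_monomial, X_pow_eq_monomial, monomial_mul, one_mul,
      mem_ideal_span_monomial_image]
    rw [support_monomial, if_neg one_ne_zero]
    simp only [Finset.mem_singleton, forall_eq]
    constructor
    · rintro ⟨si, ⟨s, hs, rfl⟩, hle⟩
      exact ⟨s, hs, (le_helper _ _ _ _).mp hle⟩
    · rintro ⟨s, hs, h1, h2⟩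
      exact ⟨_, ⟨s, hs, rfl⟩, (le_helper _ _ _ _).mpr ⟨h1, h2⟩⟩
  rw [hmem]
  have hdvd : (3 ∣ i * j) ↔ (3 ∣ i ∨ 3 ∣ j) := (Nat.prime_three).dvd_mul
  rw [hdvd]
  constructor
  · intro h
    push_neg at h
    rcases Nat.lt_or_ge (i / 3) n with hc | hc
    · have := h (i / 3) (by omega) (by omega)
      omega
    · have := h n (le_refl n) (by omega)
      omega
  · rintro (⟨h1, h2⟩ | ⟨h1, h2, h3⟩) ⟨s, hs, hs1, hs2⟩ <;> omega
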